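/- Let h ∈ ℝ⁸ with coordinates (h1,...,h8) and set Δ = h6h8 - h7². If Δ ≠ 0, then the 5×5 skew-symmetric matrix J(h) with rows/columns indexed 1..5, given by J12 = h3, J13 = h4, J14 = h6, J15 = h7, J23 = h5, J24 = h7, J25 = h8, J34 = J35 = J45 = 0 (and Jji = -Jij, Jii = 0), has rank exactly 4. -/

import Mathlib

/- Rank of the Lie–Poisson structure matrix on the dual of the (2,3,5,8)
Carnot algebra, generic case Δ = h6h8 - h7² ≠ 0. -/

noncomputable section

/-- The 5×5 skew-symmetric Poisson structure matrix J(h) in the variables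
h1,...,h5 (h = (h1,...,h8) with 0-based indexing h i = h_{i+1}). -/
noncomputable def J (h : Fin 8 → ℝ) : Matrix (Fin 5) (Fin 5) ℝ :=
  !![0, h 2, h 3, h 5, h 6;
     -(h 2), 0, h 4, h 6, h 7;
     -(h 3), -(h 4), 0, 0, 0;
     -(h 5), -(h 6), 0, 0, 0;
     -(h 6), -(h 7), 0, 0, 0]

/-- Left selection matrix (rows 0,1,3,4). -/
noncomputable def P : Matrix (Fin 4) (Fin 5) ℝ :=
  !![1,0,0,0,0; 0,1,0,0,0; 0,0,0,1,0; 0,0,0,0,1]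

/-- Right selection matrix. -/
noncomputable def Q : Matrix (Fin 5) (Fin 4) ℝ :=
  !![1,0,0,0; 0,1,0,0; 0,0,0,0; 0,0,1,0; 0,0,0,1]

/-- The 4×4 submatrix on rows/columns {0,1,3,4}. -/
noncomputable def S (h : Fin 8 → ℝ) : Matrix (Fin 4) (Fin 4) ℝ :=
  !![0, h 2, h 5, h 6;
     -(h 2), 0, h 6, h 7;
     -(h 5), -(h 6), 0, 0;
     -(h 6), -(h 7), 0, 0]

lemma S_eq (h : Fin 8 → ℝ) : S h = P * J h * Q := by
  ext i j
  fin_cases i <;> fin_cases j <;>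
    simp [S, P, Q, J, Matrix.mul_apply, Fin.sum_univ_five, Fin.sum_univ_four,
      Matrix.vecHead, Matrix.vecTail]

lemma det_S (h : Fin 8 → ℝ) : (S h).det = (h 5 * h 7 - (h 6)^2)^2 := by
  simp [S, Matrix.det_succ_row_zero, Fin.sum_univ_succ, Fin.succAbove, Fin.lt_def,
    Fin.castSucc, Fin.castAdd, Fin.castLE, -Fin.val_fin_lt, -Fin.lt_def]
  ring

/-- A kernel vector for J(h). -/
noncomputable def v (h : Fin 8 → ℝ) : Fin 5 → ℝ :=
  ![0, 0, h 5 * h 7 - (h 6)^2, h 6 * h 4 - h 3 * h 7, h 3 * h 6 - h 5 * h 4]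

lemma mulVec_v (h : Fin 8 → ℝ) : (J h).mulVec (v h) = 0 := by
  funext i
  fin_cases i <;>
    simp [J, v, Matrix.mulVec, dotProduct, Fin.sum_univ_five] <;> ring

theorem rank_J_generic (h : Fin 8 → ℝ) (hΔ : h 5 * h 7 - (h 6)^2 ≠ 0) :
    (J h).rank = 4 := by
  have hdet : IsUnit (S h).det := by
    rw [det_S]; exact (pow_ne_zero 2 hΔ).isUnit
  have hSrank : (S h).rank = 4 := by
    simpa using Matrix.rank_of_isUnit (S h) ((Matrix.isUnit_iff_isUnit_det _).mpr hdet)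
  -- lower bound
  have hlow : 4 ≤ (J h).rank := by
    rw [← hSrank, S_eq]
    calc (P * J h * Q).rank ≤ (P * J h).rank := Matrix.rank_mul_le_left (P * J h) Q
      _ ≤ (J h).rank := Matrix.rank_mul_le_right P (J h)
  -- upper bound via kernel vector
  have hker : LinearMap.ker (J h).mulVecLin ≠ ⊥ := by
    intro hbot
    have hv : v h ∈ LinearMap.ker (J h).mulVecLin := by
      simp [LinearMap.mem_ker, Matrix.mulVecLin_apply, mulVec_v]
    rw [hbot, Submodule.mem_bot] at hv
    exact hΔ (by simpa [v] using congrFun hv 2)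
  have hup : (J h).rank ≤ 4 := by
    have h1 : 0 < Module.finrank ℝ (LinearMap.ker (J h).mulVecLin) := by
      rw [Module.finrank_pos_iff]
      exact Submodule.nontrivial_iff_ne_bot.mpr hker
    have h2 := LinearMap.finrank_range_add_finrank_ker (J h).mulVecLin
    rw [Module.finrank_fintype_fun_eq_card] at h2
    simp only [Fintype.card_fin] at h2
    have : (J h).rank = Module.finrank ℝ (LinearMap.range (J h).mulVecLin) := rfl
    omega
  omega

end
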